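/- Let A ∈ ℝ^{n×n}, B ∈ ℝ^{n×m}, C ∈ ℝ^{m×n} with CB invertible, and suppose the system is transformed (via the Byrnes–Isidori coordinates) so that the internal dynamics matrix Q ∈ ℝ^{(n−m)×(n−m)} arises. Then the minimum phase condition — det [λI − A, B; C, 0] ≠ 0 for all λ ∈ ℂ with Re λ ≥ 0 — implies that every eigenvalue λ of Q satisfies Re λ < 0. -/

import Mathlib

open Matrix

/-- If the linear system `(A,B,C)` with `CB` invertible is transformed via an invertible
coordinate change `U` into Byrnes–Isidori form (so that the internal dynamics matrix `Q`
arises), then the minimum phase condition `det [λI − A, B; C, 0] ≠ 0` for all `λ` with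
`Re λ ≥ 0` implies that every eigenvalue of `Q` has negative real part (`Q` is Hurwitz). -/
theorem stmt_5 {m k : ℕ}
    (A : Matrix (Fin m ⊕ Fin k) (Fin m ⊕ Fin k) ℝ)
    (B : Matrix (Fin m ⊕ Fin k) (Fin m) ℝ)
    (C : Matrix (Fin m) (Fin m ⊕ Fin k) ℝ)
    (hCB : IsUnit (C * B))
    (U : Matrix (Fin m ⊕ Fin k) (Fin m ⊕ Fin k) ℝ)
    (hU : IsUnit U)
    (R : Matrix (Fin m) (Fin m) ℝ) (S : Matrix (Fin m) (Fin k) ℝ)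
    (P : Matrix (Fin k) (Fin m) ℝ) (Q : Matrix (Fin k) (Fin k) ℝ)
    (hA : U * A * U⁻¹ = Matrix.fromBlocks R S P Q)
    (hB : U * B = Matrix.fromRows (C * B) (0 : Matrix (Fin k) (Fin m) ℝ))
    (hC : C * U⁻¹ = Matrix.fromCols (1 : Matrix (Fin m) (Fin m) ℝ)
        (0 : Matrix (Fin m) (Fin k) ℝ))
    (hmp : ∀ lam : ℂ, 0 ≤ lam.re →
        (Matrix.fromBlocks (lam • (1 : Matrix (Fin m ⊕ Fin k) (Fin m ⊕ Fin k) ℂ) -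
            A.map (algebraMap ℝ ℂ)) (B.map (algebraMap ℝ ℂ)) (C.map (algebraMap ℝ ℂ))
            (0 : Matrix (Fin m) (Fin m) ℂ)).det ≠ 0) :
    ∀ lam : ℂ, lam ∈ spectrum ℂ (Q.map (algebraMap ℝ ℂ)) → lam.re < 0 := by
  intro lam hlam
  by_contra hre
  push_neg at hre
  set f := algebraMap ℝ ℂ with hf
  -- det (lam•1 - Qℂ) = 0
  have hdetQ : (lam • (1 : Matrix (Fin k) (Fin k) ℂ) - Q.map f).det = 0 := by
    have h1 := spectrum.mem_iff.mp hlam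
    rw [Matrix.isUnit_iff_isUnit_det, isUnit_iff_ne_zero, not_not] at h1
    rw [← h1]
    congr 1
    rw [Matrix.algebraMap_eq_diagonal]
    ext i j
    by_cases h : i = j <;> simp [h, Matrix.one_apply]
  obtain ⟨η, hη, hQη⟩ := (Matrix.exists_mulVec_eq_zero_iff).mpr hdetQ
  have hUdet : IsUnit U.det := (Matrix.isUnit_iff_isUnit_det U).mp hU
  have hUU : U * U⁻¹ = (1 : Matrix (Fin m ⊕ Fin k) (Fin m ⊕ Fin k) ℝ) :=
    Matrix.mul_nonsing_inv U hUdet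
  have hCBc : IsUnit ((C * B).map f) := by
    have := hCB.map f.mapMatrix
    rwa [RingHom.mapMatrix_apply] at this
  have hCBcdet : IsUnit ((C * B).map f).det := (Matrix.isUnit_iff_isUnit_det _).mp hCBc
  set y : Fin m ⊕ Fin k → ℂ := Sum.elim 0 η with hy
  set x : (Fin m ⊕ Fin k) → ℂ := (U⁻¹.map f) *ᵥ y with hx
  set u : Fin m → ℂ := ((C * B).map f)⁻¹ *ᵥ ((S.map f) *ᵥ η) with hu
  have hUx : (U.map f) *ᵥ x = y := by
    rw [hx, mulVec_mulVec, ← Matrix.map_mul, hUU, Matrix.map_one f (map_zero f) (map_one f),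
      one_mulVec]
  -- second block row: C x = 0
  have hCx : (C.map f) *ᵥ x = 0 := by
    rw [hx, mulVec_mulVec, ← Matrix.map_mul, hC]
    have : (fromCols (1 : Matrix (Fin m) (Fin m) ℝ) (0 : Matrix (Fin m) (Fin k) ℝ)).map f
        = fromCols (1 : Matrix (Fin m) (Fin m) ℂ) (0 : Matrix (Fin m) (Fin k) ℂ) := by
      ext i (j | j)
      · simp [fromCols, Matrix.one_apply, apply_ite f]
      · simp [fromCols]
    rw [this, hy, fromCols_mulVec_sumElim]
    simp
  -- first block row
  have hfirst : (lam • (1 : Matrix (Fin m ⊕ Fin k) (Fin m ⊕ Fin k) ℂ) - A.map f) *ᵥ x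
      + (B.map f) *ᵥ u = 0 := by
    apply (Matrix.mulVec_injective_iff_isUnit.mpr (by
      have := hU.map f.mapMatrix
      rwa [RingHom.mapMatrix_apply] at this)) (a₂ := 0)
    rw [mulVec_zero, mulVec_add]
    have h1 : (U.map f) *ᵥ ((lam • (1 : Matrix (Fin m ⊕ Fin k) (Fin m ⊕ Fin k) ℂ) - A.map f) *ᵥ x)
        = lam • y - ((fromBlocks R S P Q).map f) *ᵥ y := by
      rw [mulVec_mulVec, Matrix.mul_sub, sub_mulVec]
      congr 1
      · rw [Matrix.mul_smul, Matrix.mul_one, smul_mulVec, hUx]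
      · rw [← hA, Matrix.map_mul, Matrix.map_mul, hx, mulVec_mulVec]
    have h2 : (U.map f) *ᵥ ((B.map f) *ᵥ u)
        = Sum.elim (((C * B).map f) *ᵥ u) 0 := by
      rw [mulVec_mulVec, ← Matrix.map_mul, hB]
      have : (fromRows (C * B) (0 : Matrix (Fin k) (Fin m) ℝ)).map f
          = fromRows ((C * B).map f) (0 : Matrix (Fin k) (Fin m) ℂ) := by
        ext (i | i) j
        · rfl
        · simp only [Matrix.map_apply, fromRows_apply_inr, Matrix.zero_apply, map_zero]
      rw [this, fromRows_mulVec]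
      simp
    rw [h1, h2]
    have hCBu : ((C * B).map f) *ᵥ u = (S.map f) *ᵥ η := by
      rw [hu, mulVec_mulVec, Matrix.mul_nonsing_inv _ hCBcdet, one_mulVec]
    have hblock : ((fromBlocks R S P Q).map f) *ᵥ y
        = Sum.elim ((S.map f) *ᵥ η) ((Q.map f) *ᵥ η) := by
      rw [Matrix.fromBlocks_map, hy, fromBlocks_mulVec]
      simp
    rw [hCBu, hblock]
    ext (i | i)
    · simp [hy]
    · have := congrFun hQη i
      simp only [sub_mulVec, smul_mulVec, one_mulVec, Pi.sub_apply, Pi.smul_apply,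
        Pi.zero_apply] at this
      simp only [smul_eq_mul] at this
      simp [hy, this]
  -- contradiction with hmp
  have hdet0 : (Matrix.fromBlocks (lam • (1 : Matrix (Fin m ⊕ Fin k) (Fin m ⊕ Fin k) ℂ) -
      A.map f) (B.map f) (C.map f) (0 : Matrix (Fin m) (Fin m) ℂ)).det = 0 := by
    rw [← Matrix.exists_mulVec_eq_zero_iff]
    refine ⟨Sum.elim x u, ?_, ?_⟩
    · intro h
      apply hη
      have hx0 : x = 0 := by
        ext i; exact congrFun h (Sum.inl i)
      have : y = 0 := by rw [← hUx, hx0, mulVec_zero]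
      ext i; exact congrFun this (Sum.inr i)
    · rw [fromBlocks_mulVec]
      simp only [Sum.elim_comp_inl, Sum.elim_comp_inr]
      rw [hfirst, hCx]
      simp
  exact hmp lam hre hdet0
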